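/- arXiv:2010.11045 — 2 statements merged into one kernel-verified Lean document; each statement's English description precedes it below -/
import Mathlib

section
/- Fix a real-valued Schwartz function V on ℝ³, ε₀ > 0 and μ ∈ ℝ. Let w : [0,∞) → 𝒮(ℝ³;ℂ) be a C¹ curve in Schwartz space satisfying pointwise the equation i∂ₜw − Δw + i⟨t⟩^{−2ε₀}V(x)²w = μ|w|^{4/3}w on [0,∞). Then the damping term satisfies the global spacetime bound ‖ t ↦ ⟨t⟩^{−2ε₀}V²w(t) ‖_{L²_t L^{6/5}_x([0,∞))} ≤ 2^{−1/2} ‖V‖_{L³(ℝ³)} ‖w(0)‖_{L²(ℝ³)}. -/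
open MeasureTheory Real Set
open scoped ENNReal NNReal

noncomputable section

abbrev R3 : Type := EuclideanSpace ℝ (Fin 3)

/-- Japanese bracket `⟨t⟩ = (1+t²)^{1/2}`. -/
def jb (t : ℝ) : ℝ := Real.sqrt (1 + t ^ 2)

/-- Laplacian on `ℝ³`, as the sum of second partial derivatives along coordinates. -/
def lap (f : R3 → ℂ) (x : R3) : ℂ :=
  ∑ i : Fin 3,
    fderiv ℝ (fun y => fderiv ℝ f y (EuclideanSpace.single i 1)) x (EuclideanSpace.single i 1)

/-- Mixed norm `‖u‖_{L^q_t L^r_x(I×ℝ³)}`. -/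
def mixedNorm (q r : ℝ≥0∞) (I : Set ℝ) (u : ℝ → R3 → ℂ) : ℝ≥0∞ :=
  if q = ∞ then essSup (fun t => eLpNorm (u t) r volume) (volume.restrict I)
  else (∫⁻ t in I, (eLpNorm (u t) r volume) ^ q.toReal) ^ (1 / q.toReal)

/-- 3D-admissible Strichartz pair. -/
def IsAdmissible (q r : ℝ≥0∞) : Prop := 2 ≤ q ∧ 2 ≤ r ∧ 2 / q + 3 / r = 3 / 2

/-- Hölder conjugate exponent in `ℝ≥0∞`. -/
def hconj (p : ℝ≥0∞) : ℝ≥0∞ :=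
  if p = ∞ then 1 else if p = 1 then ∞ else ENNReal.ofReal (p.toReal / (p.toReal - 1))

/-- A C¹ curve in Schwartz space on a time set `I`, with derivative curve `w'`. -/
structure IsC1Curve (I : Set ℝ) (w w' : ℝ → SchwartzMap R3 ℂ) : Prop where
  deriv : ∀ t ∈ I, ∀ x : R3, HasDerivAt (fun s => w s x) (w' t x) t
  cont : ContinuousOn w' I

/-- Left-hand side `i ∂ₜ w − Δ w + i ⟨t⟩^{−2ε₀} V(x)² w` of the damped Schrödinger equation. -/
def DampedLHS (V : SchwartzMap R3 ℝ) (ε₀ : ℝ) (w w' : ℝ → SchwartzMap R3 ℂ)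
    (t : ℝ) (x : R3) : ℂ :=
  Complex.I * w' t x - lap (⇑(w t)) x
    + Complex.I * ((jb t ^ (-(2 * ε₀)) : ℝ) : ℂ) * ((V x : ℝ) : ℂ) ^ 2 * w t x

/-- The mass-critical nonlinearity `|z|^{4/3} z`. -/
def nl (z : ℂ) : ℂ := ((‖z‖ ^ ((4 : ℝ) / 3) : ℝ) : ℂ) * z

/-- Dual Strichartz norm `‖F‖_{N(I)}`. -/
def dualNorm (I : Set ℝ) (F : ℝ → R3 → ℂ) : ℝ≥0∞ :=
  ⨅ (q : ℝ≥0∞) (r : ℝ≥0∞) (_ : IsAdmissible q r), mixedNorm (hconj q) (hconj r) I F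

lemma schwartz_norm_bdd {F : Type*} [NormedAddCommGroup F] [NormedSpace ℝ F]
    (f : SchwartzMap R3 F) : ∃ C, ∀ x, ‖f x‖ ≤ C := by
  refine ⟨SchwartzMap.seminorm ℝ 0 0 f, fun x => ?_⟩
  simpa using SchwartzMap.le_seminorm ℝ 0 0 f x

lemma bdd_mul_schwartz (φ : R3 → ℂ) (hφ : AEStronglyMeasurable φ volume)
    (hb : ∃ C, ∀ x, ‖φ x‖ ≤ C) (f : SchwartzMap R3 ℂ) :
    Integrable (fun x => φ x * f x) volume :=
  Integrable.bdd_mul (c := hb.choose) f.integrable hφ (Filter.Eventually.of_forall hb.choose_spec)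

lemma conj_bdd (f : SchwartzMap R3 ℂ) : ∃ C, ∀ x, ‖(starRingEnd ℂ) (f x)‖ ≤ C := by
  obtain ⟨C, hC⟩ := schwartz_norm_bdd f; exact ⟨C, fun x => by simpa using hC x⟩

lemma conj_meas (f : SchwartzMap R3 ℂ) :
    AEStronglyMeasurable (fun x : R3 => (starRingEnd ℂ) (f x)) volume :=
  (Complex.continuous_conj.comp f.continuous).aestronglyMeasurable

lemma conj_fderiv (f : SchwartzMap R3 ℂ) (x : R3) (v : R3) :
    fderiv ℝ (fun y => (starRingEnd ℂ) (f y)) x v = (starRingEnd ℂ) (fderiv ℝ (⇑f) x v) := by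
  have h : HasFDerivAt (fun y => (starRingEnd ℂ) (f y))
      ((Complex.conjCLE : ℂ ≃L[ℝ] ℂ).toContinuousLinearMap.comp (fderiv ℝ (⇑f) x)) x :=
    (Complex.conjCLE.toContinuousLinearMap.hasFDerivAt.comp x f.differentiableAt.hasFDerivAt)
  rw [h.fderiv]; rfl

def SchwartzMap.pderivCLM (𝕜 : Type) (m : R3) : SchwartzMap R3 ℂ →L[ℝ] SchwartzMap R3 ℂ :=
  LineDeriv.lineDerivOpCLM ℝ (SchwartzMap R3 ℂ) m

lemma SchwartzMap.pderivCLM_apply (𝕜 : Type) (m : R3) (f : SchwartzMap R3 ℂ) (x : R3) :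
    SchwartzMap.pderivCLM 𝕜 m f x = fderiv ℝ f x m := rfl

lemma lap_eq (f : SchwartzMap R3 ℂ) (x : R3) :
    lap (⇑f) x = ∑ i : Fin 3,
      (SchwartzMap.pderivCLM ℝ (EuclideanSpace.single i 1)
        (SchwartzMap.pderivCLM ℝ (EuclideanSpace.single i 1) f)) x := by
  unfold lap
  refine Finset.sum_congr rfl fun i _ => ?_
  rw [SchwartzMap.pderivCLM_apply]
  rfl

lemma ibp_im (f : SchwartzMap R3 ℂ) :
    (∫ x : R3, (starRingEnd ℂ) (f x) * lap (⇑f) x).im = 0 := by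
  set e : Fin 3 → R3 := fun i => EuclideanSpace.single i 1 with he
  set g : Fin 3 → SchwartzMap R3 ℂ := fun i => SchwartzMap.pderivCLM ℝ (e i) f with hg
  have hint : ∀ i, Integrable (fun x => (starRingEnd ℂ) (f x)
      * (SchwartzMap.pderivCLM ℝ (e i) (g i)) x) volume := fun i =>
    bdd_mul_schwartz _ (conj_meas f) (conj_bdd f) _
  have key : ∀ i : Fin 3, ∫ x : R3, (starRingEnd ℂ) (f x) * (SchwartzMap.pderivCLM ℝ (e i) (g i)) x
      = -((∫ x : R3, Complex.normSq ((g i) x) : ℝ) : ℂ) := by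
    intro i
    have h1 : Integrable (fun x => fderiv ℝ (fun y => (starRingEnd ℂ) (f y)) x (e i) * g i x) volume := by
      have heq : (fun x => fderiv ℝ (fun y => (starRingEnd ℂ) (f y)) x (e i) * g i x)
          = fun x => (starRingEnd ℂ) ((g i) x) * (g i) x := by
        funext x; rw [conj_fderiv, ← SchwartzMap.pderivCLM_apply ℝ (e i) f x]
      rw [heq]
      exact bdd_mul_schwartz _ (conj_meas (g i)) (conj_bdd (g i)) _
    have h2 : Integrable (fun x => (starRingEnd ℂ) (f x) * fderiv ℝ (⇑(g i)) x (e i)) volume := by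
      have heq : (fun x => (starRingEnd ℂ) (f x) * fderiv ℝ (⇑(g i)) x (e i))
          = fun x => (starRingEnd ℂ) (f x) * (SchwartzMap.pderivCLM ℝ (e i) (g i)) x := by
        funext x; rw [SchwartzMap.pderivCLM_apply]
      rw [heq]; exact hint i
    have h3 : Integrable (fun x => (starRingEnd ℂ) (f x) * g i x) volume :=
      bdd_mul_schwartz _ (conj_meas f) (conj_bdd f) _
    have hibp := integral_mul_fderiv_eq_neg_fderiv_mul_of_integrable (μ := volume)
      (f := fun y => (starRingEnd ℂ) (f y)) (g := ⇑(g i)) (v := e i) h1 h2 h3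
      (fun x _ => ((Complex.conjCLE : ℂ ≃L[ℝ] ℂ).differentiable.comp f.differentiable) x) (fun x _ => (g i).differentiable x)
    calc ∫ x : R3, (starRingEnd ℂ) (f x) * (SchwartzMap.pderivCLM ℝ (e i) (g i)) x
        = ∫ x : R3, (starRingEnd ℂ) (f x) * fderiv ℝ (⇑(g i)) x (e i) := by
          refine integral_congr_ae (Filter.Eventually.of_forall fun x => ?_)
          simp only [SchwartzMap.pderivCLM_apply]
      _ = -∫ x : R3, fderiv ℝ (fun y => (starRingEnd ℂ) (f y)) x (e i) * g i x := hibp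
      _ = -((∫ x : R3, Complex.normSq ((g i) x) : ℝ) : ℂ) := by
          congr 1
          refine Eq.trans (integral_congr_ae (Filter.Eventually.of_forall fun x => ?_))
            (integral_ofReal (𝕜 := ℂ))
          simp only [conj_fderiv]
          rw [← SchwartzMap.pderivCLM_apply ℝ (e i) f x, mul_comm, Complex.mul_conj]
          rfl
  have htot : (∫ x : R3, (starRingEnd ℂ) (f x) * lap (⇑f) x)
      = ∑ i : Fin 3, ∫ x : R3, (starRingEnd ℂ) (f x) * (SchwartzMap.pderivCLM ℝ (e i) (g i)) x := by
    rw [← integral_finset_sum _ (fun i _ => hint i)]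
    refine integral_congr_ae (Filter.Eventually.of_forall fun x => ?_)
    simp only [lap_eq, Finset.mul_sum, he, hg]
  rw [htot, Complex.im_sum]
  refine Finset.sum_eq_zero fun i _ => ?_
  rw [key i]
  simp

lemma re1 (z : ℂ) (b r : ℝ) : ((starRingEnd ℂ) z * (-(Complex.I*(b:ℂ)*((r:ℂ) * z)))).re = 0 := by
  simp [Complex.mul_re, Complex.mul_im, Complex.conj_re, Complex.conj_im]
  ring

lemma re2 (z : ℂ) (c : ℝ) : ((starRingEnd ℂ) z * (-((c:ℂ) * z))).re = -(c*‖z‖^2) := by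
  simp only [Complex.mul_re, Complex.mul_im, Complex.conj_re, Complex.conj_im, Complex.neg_re,
    Complex.neg_im, Complex.ofReal_re, Complex.ofReal_im]
  rw [Complex.sq_norm, Complex.normSq_apply]; ring

lemma sq_norm_integrable (f : SchwartzMap R3 ℂ) : Integrable (fun x => ‖f x‖^2) volume := by
  have h := Integrable.bdd_mul (μ := (volume : Measure R3)) (f := fun x => ‖f x‖)
    (g := fun x => ‖f x‖)
    ((f.integrable (μ := volume)).norm) f.continuous.norm.aestronglyMeasurable
    (c := (schwartz_norm_bdd f).choose)
    (Filter.Eventually.of_forall fun x => by simpa using (schwartz_norm_bdd f).choose_spec x)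
  have : (fun x : R3 => ‖f x‖ * ‖f x‖) = fun x => ‖f x‖^2 := by funext x; ring
  rwa [this] at h

lemma wt_sq_integrable (V : SchwartzMap R3 ℝ) (f : SchwartzMap R3 ℂ) :
    Integrable (fun x => (V x)^2 * ‖f x‖^2) volume := by
  obtain ⟨C, hC⟩ := schwartz_norm_bdd V
  refine Integrable.bdd_mul (c := C^2) (sq_norm_integrable f)
    ((V.continuous.pow 2).aestronglyMeasurable) ?_
  exact Filter.Eventually.of_forall fun x => by
    have h0 := hC x
    calc ‖V x ^ 2‖ = ‖V x‖^2 := by rw [norm_pow]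
      _ ≤ C^2 := by nlinarith [norm_nonneg (V x)]

/-- The integral identity for the mass derivative integrand. -/
lemma mass_deriv_eq (V : SchwartzMap R3 ℝ) (ε₀ μ : ℝ) (w w' : ℝ → SchwartzMap R3 ℂ)
    (t : ℝ) (hPDEt : ∀ x : R3, DampedLHS V ε₀ w w' t x = (μ : ℂ) * nl (w t x)) :
    ∫ x : R3, 2*(((starRingEnd ℂ) (w t x)) * w' t x).re
      = -2 * (jb t ^ (-(2*ε₀)) * ∫ x : R3, (V x)^2 * ‖w t x‖^2) := by
  set c : ℝ := jb t ^ (-(2*ε₀)) with hc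
  set Lw : SchwartzMap R3 ℂ := ∑ i : Fin 3,
    SchwartzMap.pderivCLM ℝ (EuclideanSpace.single i 1)
      (SchwartzMap.pderivCLM ℝ (EuclideanSpace.single i 1) (w t)) with hLw
  have hlap : ∀ x, lap (⇑(w t)) x = Lw x := by
    intro x; rw [lap_eq, hLw]
    rw [← SchwartzMap.coe_coeHom, map_sum]
    simp
  have hw' : ∀ x, w' t x = -(Complex.I*(μ:ℂ)*nl (w t x)) - Complex.I * Lw x
      - (c:ℂ)*((V x : ℝ):ℂ)^2 * w t x := by
    intro x
    have h := hPDEt x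
    unfold DampedLHS at h
    rw [hlap x] at h
    linear_combination (-Complex.I) * h
      + (w' t x + (c:ℂ)*((V x : ℝ):ℂ)^2 * w t x) * Complex.I_sq
  -- pointwise identity
  have hpt : ∀ x : R3, 2*(((starRingEnd ℂ) (w t x)) * w' t x).re
      = 2*((starRingEnd ℂ) (w t x) * (-Complex.I * Lw x)).re
        - (2*c)*((V x)^2 * ‖w t x‖^2) := by
    intro x
    rw [hw' x]
    have e1 : (starRingEnd ℂ) (w t x) * (-(Complex.I*(μ:ℂ)*nl (w t x)) - Complex.I * Lw x
        - (c:ℂ)*((V x : ℝ):ℂ)^2 * w t x)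
      = (starRingEnd ℂ) (w t x) * (-(Complex.I*(μ:ℂ)*((‖w t x‖ ^ ((4:ℝ)/3) : ℝ):ℂ) * w t x))
        + (starRingEnd ℂ) (w t x) * (-Complex.I * Lw x)
        + (starRingEnd ℂ) (w t x) * (-(((c * (V x)^2 : ℝ):ℂ) * w t x)) := by
      unfold nl; push_cast; ring
    rw [e1, Complex.add_re, Complex.add_re]
    have h1 : ((starRingEnd ℂ) (w t x) * (-(Complex.I*(μ:ℂ)*((‖w t x‖ ^ ((4:ℝ)/3) : ℝ):ℂ)
        * w t x))).re = 0 := by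
      have := re1 (w t x) μ (‖w t x‖ ^ ((4:ℝ)/3))
      rw [← this]; ring_nf
    have h3 := re2 (w t x) (c * (V x)^2)
    rw [h1, h3]
    ring
  rw [integral_congr_ae (Filter.Eventually.of_forall hpt)]
  -- split the integral
  have hintA : Integrable (fun x => (starRingEnd ℂ) (w t x) * (-Complex.I * Lw x)) volume := by
    refine ((bdd_mul_schwartz _ (conj_meas (w t)) (conj_bdd (w t))
      (Complex.I • Lw)).neg).congr (Filter.Eventually.of_forall fun x => ?_)
    simp only [SchwartzMap.smul_apply, smul_eq_mul, Pi.neg_apply]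
    ring
  have hintA2 : Integrable (fun x => 2*((starRingEnd ℂ) (w t x) * (-Complex.I * Lw x)).re)
      volume := (hintA.re.const_mul 2)
  have hintB : Integrable (fun x => (2*c)*((V x)^2 * ‖w t x‖^2)) volume :=
    (wt_sq_integrable V (w t)).const_mul _
  rw [integral_sub hintA2 hintB]
  have hA0 : ∫ x : R3, 2*((starRingEnd ℂ) (w t x) * (-Complex.I * Lw x)).re = 0 := by
    rw [integral_const_mul]
    have him : ∫ x : R3, ((starRingEnd ℂ) (w t x) * (-Complex.I * Lw x)).re
        = (∫ x : R3, (starRingEnd ℂ) (w t x) * (-Complex.I * Lw x)).re := by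
      have := integral_re (μ := (volume : Measure R3)) hintA
      exact this
    rw [him]
    have : (fun x : R3 => (starRingEnd ℂ) (w t x) * (-Complex.I * Lw x))
        = fun x => -Complex.I * ((starRingEnd ℂ) (w t x) * Lw x) := by funext x; ring
    rw [this, integral_const_mul]
    have hre : (-Complex.I * ∫ x : R3, (starRingEnd ℂ) (w t x) * Lw x).re
        = (∫ x : R3, (starRingEnd ℂ) (w t x) * Lw x).im := by simp
    rw [hre]
    have : (∫ x : R3, (starRingEnd ℂ) (w t x) * Lw x)
        = ∫ x : R3, (starRingEnd ℂ) (w t x) * lap (⇑(w t)) x := by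
      refine integral_congr_ae (Filter.Eventually.of_forall fun x => ?_)
      show (starRingEnd ℂ) (w t x) * Lw x = (starRingEnd ℂ) (w t x) * lap (⇑(w t)) x
      rw [hlap x]
    rw [this, ibp_im (w t)]
    simp
  rw [hA0, integral_const_mul]
  ring

lemma decay_int4 : Integrable (fun x : R3 => (1+‖x‖) ^ (-(4:ℝ))) volume := by
  apply integrable_one_add_norm
  simp [finrank_euclideanSpace]; norm_num

lemma decay_int8 : Integrable (fun x : R3 => (1+‖x‖) ^ (-(8:ℝ))) volume := by
  apply integrable_one_add_norm
  simp [finrank_euclideanSpace]; norm_num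

lemma decay_sq (x : R3) : (1+‖x‖) ^ (-(4:ℝ)) * (1+‖x‖) ^ (-(4:ℝ)) = (1+‖x‖) ^ (-(8:ℝ)) := by
  rw [← Real.rpow_add (by positivity)]; norm_num

lemma decay_nonneg (x : R3) : 0 ≤ (1+‖x‖) ^ (-(4:ℝ)) := by positivity

lemma decay_bound_of_continuousOn (T : ℝ) (hT : 0 ≤ T) (u : ℝ → SchwartzMap R3 ℂ)
    (hu : ContinuousOn u (Icc 0 T)) :
    ∃ C, 0 ≤ C ∧ ∀ s ∈ Icc 0 T, ∀ x : R3, ‖u s x‖ ≤ C * (1+‖x‖) ^ (-(4:ℝ)) := by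
  have hsem : ∀ (k : ℕ), Continuous fun f : SchwartzMap R3 ℂ => SchwartzMap.seminorm ℝ k 0 f :=
    fun k => ((schwartz_withSeminorms ℝ R3 ℂ).continuous_seminorm (k, 0))
  set g : ℝ → ℝ := fun s => SchwartzMap.seminorm ℝ 0 0 (u s) + SchwartzMap.seminorm ℝ 4 0 (u s)
    with hgdef
  have hg : ContinuousOn g (Icc 0 T) :=
    (((hsem 0).comp_continuousOn hu).add ((hsem 4).comp_continuousOn hu))
  obtain ⟨s₀, hs₀, hmax⟩ := isCompact_Icc.exists_isMaxOn ⟨0, by constructor <;> simp [hT]⟩ hg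
  have hg0 : 0 ≤ g s₀ := by
    have h1 := apply_nonneg (SchwartzMap.seminorm (E := R3) (F := ℂ) ℝ 0 0) (u s₀)
    have h2 := apply_nonneg (SchwartzMap.seminorm (E := R3) (F := ℂ) ℝ 4 0) (u s₀)
    simp only [hgdef]
    exact add_nonneg h1 h2
  refine ⟨2^4 * g s₀, by positivity, fun s hs x => ?_⟩
  have h1 : ‖u s x‖ ≤ SchwartzMap.seminorm ℝ 0 0 (u s) := by
    simpa using SchwartzMap.le_seminorm ℝ 0 0 (u s) x
  have h2 : ‖x‖^(0+4) * ‖u s x‖ ≤ SchwartzMap.seminorm ℝ 4 0 (u s) := by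
    simpa using SchwartzMap.le_seminorm ℝ 4 0 (u s) x
  have hkey := pow_mul_le_of_le_of_pow_mul_le (k := 0) (l := 4)
    (norm_nonneg x) (norm_nonneg _) h1 h2
  simp only [pow_zero, one_mul] at hkey
  have hcast : ((4:ℕ) : ℝ) = (4:ℝ) := by norm_num
  rw [hcast] at hkey
  refine hkey.trans ?_
  have hmono : g s ≤ g s₀ := hmax hs
  have hd := decay_nonneg x
  calc 2^4 * (SchwartzMap.seminorm ℝ 0 0 (u s) + SchwartzMap.seminorm ℝ 4 0 (u s))
        * (1+‖x‖) ^ (-(4:ℝ))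
      = 2^4 * g s * (1+‖x‖) ^ (-(4:ℝ)) := rfl
    _ ≤ 2^4 * g s₀ * (1+‖x‖) ^ (-(4:ℝ)) := by nlinarith

lemma curve_decay (w w' : ℝ → SchwartzMap R3 ℂ)
    (hder : ∀ t ∈ Ici (0:ℝ), ∀ x : R3, HasDerivAt (fun s => w s x) (w' t x) t)
    (hcont : ContinuousOn w' (Ici 0)) (T : ℝ) (hT : 0 ≤ T) :
    ∃ C, 0 ≤ C ∧ ∀ s ∈ Icc 0 T, ∀ x : R3,
      ‖w s x‖ ≤ C * (1+‖x‖) ^ (-(4:ℝ)) ∧ ‖w' s x‖ ≤ C * (1+‖x‖) ^ (-(4:ℝ)) := by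
  obtain ⟨C', hC'0, hC'⟩ := decay_bound_of_continuousOn T hT w'
    (hcont.mono (fun s hs => hs.1))
  obtain ⟨C₀, hC₀0, hC₀⟩ := decay_bound_of_continuousOn T hT (fun _ => w 0) continuousOn_const
  refine ⟨C₀ + T * C' + C', by positivity, fun s hs x => ?_⟩
  have hd := decay_nonneg x
  have hw' : ‖w' s x‖ ≤ C' * (1+‖x‖) ^ (-(4:ℝ)) := hC' s hs x
  constructor
  · have hmvt := Convex.norm_image_sub_le_of_norm_hasDerivWithin_le
      (f := fun τ => w τ x) (f' := fun τ => w' τ x) (s := Icc 0 T)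
      (C := C' * (1+‖x‖) ^ (-(4:ℝ)))
      (fun τ hτ => (hder τ hτ.1 x).hasDerivWithinAt)
      (fun τ hτ => hC' τ hτ x) (convex_Icc 0 T)
      ⟨le_refl 0, hT⟩ hs
    have hsT : ‖s - 0‖ ≤ T := by
      rw [sub_zero, Real.norm_eq_abs, abs_of_nonneg hs.1]; exact hs.2
    have h0 : ‖w 0 x‖ ≤ C₀ * (1+‖x‖) ^ (-(4:ℝ)) := hC₀ 0 ⟨le_refl 0, hT⟩ x
    have : ‖w s x‖ ≤ ‖w 0 x‖ + C' * (1+‖x‖) ^ (-(4:ℝ)) * T := by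
      have := norm_sub_norm_le (w s x) (w 0 x)
      nlinarith [hmvt, mul_le_mul_of_nonneg_left hsT (by positivity : (0:ℝ) ≤ C' * (1+‖x‖) ^ (-(4:ℝ)))]
    refine this.trans ?_
    nlinarith [mul_nonneg hC₀0 hd, mul_nonneg (mul_nonneg hT hC'0) hd, mul_nonneg hC'0 hd,
      mul_le_mul_of_nonneg_left hs.2 (mul_nonneg hC'0 hd)]
  · refine hw'.trans ?_
    nlinarith [mul_nonneg (add_nonneg hC₀0 (mul_nonneg hT hC'0)) hd]

lemma hasDerivAt_norm_sq (f : ℝ → ℂ) (d : ℂ) (t : ℝ) (h : HasDerivAt f d t) :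
    HasDerivAt (fun s => ‖f s‖ ^ 2) (2 * ((starRingEnd ℂ) (f t) * d).re) t := by
  have hre : HasDerivAt (fun s => (f s).re) d.re t :=
    (Complex.reCLM.hasFDerivAt.comp_hasDerivAt t h)
  have him : HasDerivAt (fun s => (f s).im) d.im t :=
    (Complex.imCLM.hasFDerivAt.comp_hasDerivAt t h)
  have h2 := (hre.mul hre).add (him.mul him)
  have e1 : (fun s => (f s).re * (f s).re + (f s).im * (f s).im) = fun s => ‖f s‖ ^ 2 := by
    funext s
    rw [← Complex.normSq_apply, Complex.normSq_eq_norm_sq]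
  have e2 : d.re * (f t).re + (f t).re * d.re + (d.im * (f t).im + (f t).im * d.im)
      = 2 * ((starRingEnd ℂ) (f t) * d).re := by
    simp [Complex.mul_re, Complex.conj_re, Complex.conj_im]; ring
  rw [e2] at h2; rw [← e1]; exact h2

lemma mass_contOn (w w' : ℝ → SchwartzMap R3 ℂ)
    (hder : ∀ t ∈ Ici (0:ℝ), ∀ x : R3, HasDerivAt (fun s => w s x) (w' t x) t)
    (hcont : ContinuousOn w' (Ici 0))
    (φ : R3 → ℝ) (hφc : Continuous φ) (Cφ : ℝ) (hφb : ∀ x, |φ x| ≤ Cφ)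
    (T : ℝ) (hT : 0 ≤ T) :
    ContinuousOn (fun t => ∫ x : R3, φ x * ‖w t x‖^2) (Icc 0 T) := by
  obtain ⟨C, hC0, hC⟩ := curve_decay w w' hder hcont T hT
  refine continuousOn_of_dominated
    (bound := fun x => (Cφ * (C * C)) * (1+‖x‖) ^ (-(8:ℝ)))
    (fun t _ => (hφc.mul (((w t).continuous.norm).pow 2)).aestronglyMeasurable)
    (fun t ht => Filter.Eventually.of_forall fun x => ?_)
    (decay_int8.const_mul _)
    (Filter.Eventually.of_forall fun x => ?_)
  · have hb := (hC t ht x).1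
    have hd := decay_nonneg x
    have hCφ := hφb x
    have h8 := decay_sq x
    have hn : (0:ℝ) ≤ ‖w t x‖ := norm_nonneg _
    calc ‖φ x * ‖w t x‖^2‖ = |φ x| * ‖w t x‖^2 := by
          rw [norm_mul, Real.norm_eq_abs, Real.norm_eq_abs,
            abs_of_nonneg (sq_nonneg (‖w t x‖))]
      _ ≤ Cφ * ((C * (1+‖x‖) ^ (-(4:ℝ)))^2) := by
          have h1 : ‖w t x‖^2 ≤ (C * (1+‖x‖) ^ (-(4:ℝ)))^2 := by nlinarith
          have hCφ0 : (0:ℝ) ≤ Cφ := le_trans (abs_nonneg _) hCφ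
          exact mul_le_mul hCφ h1 (sq_nonneg _) hCφ0
      _ = (Cφ * (C * C)) * (1+‖x‖) ^ (-(8:ℝ)) := by rw [← h8]; ring
  · have hwc : ContinuousOn (fun s => w s x) (Icc 0 T) := fun t ht =>
      ((hder t ht.1 x).continuousAt).continuousWithinAt
    exact continuousOn_const.mul ((hwc.norm).pow 2)

lemma mass_hasDerivAt (w w' : ℝ → SchwartzMap R3 ℂ)
    (hder : ∀ t ∈ Ici (0:ℝ), ∀ x : R3, HasDerivAt (fun s => w s x) (w' t x) t)
    (hcont : ContinuousOn w' (Ici 0)) (T : ℝ) (t : ℝ) (ht : t ∈ Ioo 0 T) :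
    HasDerivAt (fun s => ∫ x : R3, ‖w s x‖^2)
      (∫ x : R3, 2*(((starRingEnd ℂ) (w t x)) * w' t x).re) t := by
  have hT : (0:ℝ) ≤ T := le_of_lt (lt_trans ht.1 ht.2)
  obtain ⟨C, hC0, hC⟩ := curve_decay w w' hder hcont T hT
  set ε := min t (T - t) with hε
  have hε0 : 0 < ε := lt_min ht.1 (by linarith [ht.2])
  have hball : Metric.ball t ε ⊆ Icc 0 T := by
    intro s hsb
    rw [Metric.mem_ball, Real.dist_eq, abs_lt] at hsb
    constructor
    · have := min_le_left t (T - t); linarith [hsb.1]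
    · have := min_le_right t (T - t); linarith [hsb.2]
  have hballI : Metric.ball t ε ⊆ Ici (0:ℝ) := fun s hs => (hball hs).1
  have key := hasDerivAt_integral_of_dominated_loc_of_deriv_le (μ := (volume : Measure R3))
    (F := fun s x => ‖w s x‖^2) (F' := fun s x => 2*(((starRingEnd ℂ) (w s x)) * w' s x).re)
    (x₀ := t) (bound := fun x => (2 * (C * C)) * (1+‖x‖) ^ (-(8:ℝ))) (Metric.ball_mem_nhds t hε0)
    (Filter.Eventually.of_forall fun s => (((w s).continuous.norm).pow 2).aestronglyMeasurable)
    (sq_norm_integrable (w t))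
    ((continuous_const.mul (Complex.continuous_re.comp ((Complex.continuous_conj.comp
      (w t).continuous).mul (w' t).continuous))).aestronglyMeasurable)
    (Filter.Eventually.of_forall fun x => fun s hs => ?_)
    (decay_int8.const_mul _)
    (Filter.Eventually.of_forall fun x => fun s hs => ?_)
  · exact key.2
  · -- bound
    have h1 := (hC s (hball hs) x).1
    have h2 := (hC s (hball hs) x).2
    have hd := decay_nonneg x
    have hre : |(((starRingEnd ℂ) (w s x)) * w' s x).re| ≤ ‖w s x‖ * ‖w' s x‖ := by
      calc |(((starRingEnd ℂ) (w s x)) * w' s x).re| ≤ ‖((starRingEnd ℂ) (w s x)) * w' s x‖ :=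
            Complex.abs_re_le_norm _
        _ = ‖w s x‖ * ‖w' s x‖ := by rw [norm_mul, RCLike.norm_conj]
    calc ‖2*(((starRingEnd ℂ) (w s x)) * w' s x).re‖
        = 2 * |(((starRingEnd ℂ) (w s x)) * w' s x).re| := by
          rw [norm_mul, Real.norm_eq_abs, Real.norm_eq_abs, abs_two]
      _ ≤ 2 * (‖w s x‖ * ‖w' s x‖) := by linarith
      _ ≤ 2 * ((C * (1+‖x‖) ^ (-(4:ℝ))) * (C * (1+‖x‖) ^ (-(4:ℝ)))) := by
          have := mul_le_mul h1 h2 (norm_nonneg _) (by positivity)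
          linarith
      _ = (2 * (C * C)) * (1+‖x‖) ^ (-(8:ℝ)) := by rw [← decay_sq x]; ring
  · -- derivative
    exact hasDerivAt_norm_sq _ _ s (hder s (hballI hs) x)

/-- Mass-dissipation: the integral identity on `[0, T]`. -/
lemma mass_dissipation (V : SchwartzMap R3 ℝ) (ε₀ μ : ℝ) (w w' : ℝ → SchwartzMap R3 ℂ)
    (hder : ∀ t ∈ Ici (0:ℝ), ∀ x : R3, HasDerivAt (fun s => w s x) (w' t x) t)
    (hcont : ContinuousOn w' (Ici 0))
    (hPDE : ∀ t ∈ Ici (0 : ℝ), ∀ x : R3, DampedLHS V ε₀ w w' t x = (μ : ℂ) * nl (w t x))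
    (T : ℝ) (hT : 0 ≤ T) :
    ∫ s in (0:ℝ)..T, (-2) * (jb s ^ (-(2*ε₀)) * ∫ x : R3, (V x)^2 * ‖w s x‖^2)
      = (∫ x : R3, ‖w T x‖^2) - (∫ x : R3, ‖w 0 x‖^2) := by
  obtain ⟨CV, hCV⟩ := schwartz_norm_bdd V
  have hVb : ∀ x : R3, |(V x)^2| ≤ CV^2 := by
    intro x
    rw [abs_pow]
    have := hCV x
    rw [Real.norm_eq_abs] at this
    nlinarith [abs_nonneg (V x)]
  have hDcont : ContinuousOn (fun s => ∫ x : R3, (V x)^2 * ‖w s x‖^2) (Icc 0 T) :=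
    mass_contOn w w' hder hcont _ (V.continuous.pow 2) (CV^2) hVb T hT
  have hjbcont : Continuous (fun s : ℝ => jb s ^ (-(2*ε₀))) := by
    apply Continuous.rpow_const
    · unfold jb; exact Real.continuous_sqrt.comp (by continuity)
    · intro s
      left
      unfold jb
      positivity
  have hmcont : ContinuousOn (fun s => ∫ x : R3, ‖w s x‖^2) (Icc 0 T) := by
    have h := mass_contOn w w' hder hcont (fun _ => (1:ℝ)) continuous_const 1
      (fun x => by norm_num) T hT
    refine h.congr fun s hs => ?_
    congr 1
    funext x
    rw [one_mul]
  have hderiv : ∀ s ∈ Ioo 0 T, HasDerivWithinAt (fun s => ∫ x : R3, ‖w s x‖^2)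
      ((-2) * (jb s ^ (-(2*ε₀)) * ∫ x : R3, (V x)^2 * ‖w s x‖^2)) (Ioi s) s := by
    intro s hs
    have h := mass_hasDerivAt w w' hder hcont T s hs
    rw [mass_deriv_eq V ε₀ μ w w' s (hPDE s (le_of_lt hs.1))] at h
    exact h.hasDerivWithinAt
  have hint : IntervalIntegrable
      (fun s => (-2) * (jb s ^ (-(2*ε₀)) * ∫ x : R3, (V x)^2 * ‖w s x‖^2)) volume 0 T := by
    apply ContinuousOn.intervalIntegrable
    rw [uIcc_of_le hT]
    exact (continuousOn_const.mul ((hjbcont.continuousOn).mul hDcont))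
  exact intervalIntegral.integral_eq_sub_of_hasDeriv_right_of_le hT hmcont hderiv hint
section Test
variable (V : SchwartzMap R3 ℝ) (ε₀ μ : ℝ) (w w' : ℝ → SchwartzMap R3 ℂ)

lemma diss_le (hder : ∀ t ∈ Ici (0:ℝ), ∀ x : R3, HasDerivAt (fun s => w s x) (w' t x) t)
    (hcont : ContinuousOn w' (Ici 0))
    (hPDE : ∀ t ∈ Ici (0 : ℝ), ∀ x : R3, DampedLHS V ε₀ w w' t x = (μ : ℂ) * nl (w t x))
    (T : ℝ) (hT : 0 ≤ T) :
    ∫ s in (0:ℝ)..T, (jb s ^ (-(2*ε₀)) * ∫ x : R3, (V x)^2 * ‖w s x‖^2)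
      ≤ (∫ x : R3, ‖w 0 x‖^2) / 2 := by
  have hmd := mass_dissipation V ε₀ μ w w' hder hcont hPDE T hT
  rw [intervalIntegral.integral_const_mul] at hmd
  have hmT : 0 ≤ ∫ x : R3, ‖w T x‖^2 := integral_nonneg fun x => sq_nonneg _
  linarith

lemma lint_bound (hder : ∀ t ∈ Ici (0:ℝ), ∀ x : R3, HasDerivAt (fun s => w s x) (w' t x) t)
    (hcont : ContinuousOn w' (Ici 0))
    (hPDE : ∀ t ∈ Ici (0 : ℝ), ∀ x : R3, DampedLHS V ε₀ w w' t x = (μ : ℂ) * nl (w t x)) :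
    ∫⁻ s in Ici (0:ℝ),
        ENNReal.ofReal (jb s ^ (-(2*ε₀)) * ∫ x : R3, (V x)^2 * ‖w s x‖^2)
      ≤ ENNReal.ofReal ((∫ x : R3, ‖w 0 x‖^2) / 2) := by
  obtain ⟨CV, hCV⟩ := schwartz_norm_bdd V
  have hVb : ∀ x : R3, |(V x)^2| ≤ CV^2 := by
    intro x
    rw [abs_pow]
    have := hCV x
    rw [Real.norm_eq_abs] at this
    nlinarith [abs_nonneg (V x)]
  have hjbcont : Continuous (fun s : ℝ => jb s ^ (-(2*ε₀))) := by
    apply Continuous.rpow_const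
    · unfold jb; exact Real.continuous_sqrt.comp (by continuity)
    · intro s; left; unfold jb; positivity
  set f : ℝ → ℝ := fun s => jb s ^ (-(2*ε₀)) * ∫ x : R3, (V x)^2 * ‖w s x‖^2 with hf
  have hf_nonneg : ∀ s, 0 ≤ f s := by
    intro s
    have h1 : (0:ℝ) ≤ jb s ^ (-(2*ε₀)) := by unfold jb; positivity
    have h2 : (0:ℝ) ≤ ∫ x : R3, (V x)^2 * ‖w s x‖^2 :=
      integral_nonneg fun x => by positivity
    exact mul_nonneg h1 h2
  have hfcont : ∀ n : ℕ, ContinuousOn f (Icc 0 (n:ℝ)) := by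
    intro n
    rcases le_or_gt 0 (n:ℝ) with hn | hn
    · exact (hjbcont.continuousOn).mul (mass_contOn w w' hder hcont _ (V.continuous.pow 2)
        (CV^2) hVb _ hn)
    · rw [Icc_eq_empty (by linarith)]; exact continuousOn_empty _
  set g : ℕ → ℝ → ℝ≥0∞ := fun n => (Icc (0:ℝ) (n:ℝ)).indicator (fun s => ENNReal.ofReal (f s))
    with hg
  have hstep : ∀ n : ℕ, ∫⁻ s, g n s ≤ ENNReal.ofReal ((∫ x : R3, ‖w 0 x‖^2) / 2) := by
    intro n
    rw [hg]
    simp only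
    rw [lintegral_indicator measurableSet_Icc]
    have hInt : IntegrableOn f (Icc 0 (n:ℝ)) volume := (hfcont n).integrableOn_Icc
    rw [← ofReal_integral_eq_lintegral_ofReal hInt
      (Filter.Eventually.of_forall fun s => hf_nonneg s)]
    apply ENNReal.ofReal_le_ofReal
    rcases le_or_gt 0 (n:ℝ) with hn | hn
    · have := diss_le V ε₀ μ w w' hder hcont hPDE (n:ℝ) hn
      rw [intervalIntegral.integral_of_le hn] at this
      rw [integral_Icc_eq_integral_Ioc]
      exact this
    · rw [Icc_eq_empty (by linarith)]
      simp only [Measure.restrict_empty, integral_zero_measure]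
      positivity
  have hmono : ∀ s, Monotone fun n : ℕ => g n s := by
    intro s m n hmn
    rw [hg]
    exact Set.indicator_le_indicator_apply_of_subset
      (Icc_subset_Icc le_rfl (by exact_mod_cast hmn)) zero_le
  have hmeas : ∀ n : ℕ, AEMeasurable (g n) volume := by
    intro n
    rw [hg]
    refine (aemeasurable_indicator_iff measurableSet_Icc).2 ?_
    exact (ENNReal.measurable_ofReal.comp_aemeasurable
      ((hfcont n).aemeasurable measurableSet_Icc))
  have hsup : ∀ s, (Ici (0:ℝ)).indicator (fun s => ENNReal.ofReal (f s)) s = ⨆ n, g n s := by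
    intro s
    rcases le_or_gt 0 s with hs | hs
    · obtain ⟨n, hn⟩ := exists_nat_ge s
      apply le_antisymm
      · rw [Set.indicator_of_mem (mem_Ici.2 hs)]
        refine le_trans ?_ (le_iSup _ n)
        have : g n s = ENNReal.ofReal (f s) :=
          Set.indicator_of_mem (mem_Icc.2 ⟨hs, hn⟩) _
        rw [this]
      · refine iSup_le fun m => ?_
        exact Set.indicator_le_indicator_apply_of_subset
          (fun y hy => hy.1) zero_le
    · have h0 : (Ici (0:ℝ)).indicator (fun s => ENNReal.ofReal (f s)) s = 0 :=
        Set.indicator_of_notMem (by simpa using hs) _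
      have hm : ∀ m : ℕ, g m s = 0 := fun m =>
        Set.indicator_of_notMem (fun hy => absurd hy.1 (not_le.2 hs)) _
      simp [h0, hm]
  calc ∫⁻ s in Ici (0:ℝ), ENNReal.ofReal (f s)
      = ∫⁻ s, (Ici (0:ℝ)).indicator (fun s => ENNReal.ofReal (f s)) s := by
        rw [lintegral_indicator measurableSet_Ici]
    _ = ∫⁻ s, ⨆ n, g n s := by
        apply lintegral_congr
        exact hsup
    _ = ⨆ n, ∫⁻ s, g n s := lintegral_iSup' hmeas (Filter.Eventually.of_forall hmono)
    _ ≤ ENNReal.ofReal ((∫ x : R3, ‖w 0 x‖^2) / 2) := iSup_le hstep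

end Test

lemma enn_two_toReal : (2:ℝ≥0∞).toReal = 2 := by simp

lemma E_sq (V : SchwartzMap R3 ℝ) (f : SchwartzMap R3 ℂ) :
    eLpNorm (fun x => ((V x : ℝ):ℂ) * f x) 2 volume ^ (2:ℝ)
      = ENNReal.ofReal (∫ x : R3, (V x)^2 * ‖f x‖^2) := by
  rw [eLpNorm_eq_lintegral_rpow_enorm_toReal (by norm_num) (by norm_num)]
  rw [enn_two_toReal, ← ENNReal.rpow_mul,
    show ((1:ℝ)/2 * 2 : ℝ) = 1 by norm_num, ENNReal.rpow_one]
  have hpt : ∀ x : R3, ‖((V x : ℝ):ℂ) * f x‖ₑ ^ (2:ℝ)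
      = ENNReal.ofReal ((V x)^2 * ‖f x‖^2) := by
    intro x
    rw [← ofReal_norm,
      ENNReal.ofReal_rpow_of_nonneg (norm_nonneg _) (by norm_num : (0:ℝ) ≤ 2)]
    congr 1
    have h2 : ‖((V x : ℝ):ℂ) * f x‖ ^ (2:ℝ) = ‖((V x : ℝ):ℂ) * f x‖ ^ (2:ℕ) := by
      rw [← Real.rpow_natCast]; norm_num
    rw [h2, norm_mul, Complex.norm_real, mul_pow, Real.norm_eq_abs, sq_abs]
  rw [lintegral_congr hpt]
  rw [← ofReal_integral_eq_lintegral_ofReal (wt_sq_integrable V f)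
    (Filter.Eventually.of_forall fun x => by positivity)]

lemma eln_ofc (V : SchwartzMap R3 ℝ) (p : ℝ≥0∞) :
    eLpNorm (fun x : R3 => ((V x : ℝ):ℂ)) p volume = eLpNorm (⇑V) p volume := by
  have h1 : eLpNorm (fun x : R3 => ‖((V x : ℝ):ℂ)‖) p volume
      = eLpNorm (fun x : R3 => ((V x : ℝ):ℂ)) p volume := eLpNorm_norm _
  have h2 : eLpNorm (fun x : R3 => ‖V x‖) p volume = eLpNorm (⇑V) p volume := eLpNorm_norm _
  rw [← h1, ← h2]
  congr 1
  funext x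
  simp [Complex.norm_real]

lemma V3_fin (V : SchwartzMap R3 ℝ) : eLpNorm (⇑V) 3 volume < ⊤ := by
  obtain ⟨CV, hCV⟩ := schwartz_norm_bdd V
  have hi : Integrable (fun x : R3 => ‖V x‖^3) volume := by
    have h := Integrable.bdd_mul (μ := (volume : Measure R3)) (g := fun x => ‖V x‖)
      (f := fun x => ‖V x‖^2) ((V.integrable (μ := volume)).norm)
      ((V.continuous.norm.pow 2).aestronglyMeasurable)
      (c := CV^2) (Filter.Eventually.of_forall fun x => by
        have h1 := hCV x
        have h2 : ‖V x‖^2 ≤ CV^2 := by nlinarith [norm_nonneg (V x)]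
        simpa [Real.norm_eq_abs, abs_of_nonneg (sq_nonneg (‖V x‖))] using h2)
    refine h.congr (Filter.Eventually.of_forall fun x => ?_)
    ring
  rw [eLpNorm_eq_lintegral_rpow_enorm_toReal (by norm_num) (by norm_num)]
  have h3 : ((3:ℝ≥0∞)).toReal = 3 := by simp
  rw [h3]
  refine ENNReal.rpow_lt_top_of_nonneg (by norm_num) ?_
  have hpt : ∀ x : R3, ‖V x‖ₑ ^ (3:ℝ) = ENNReal.ofReal (‖V x‖^3) := by
    intro x
    rw [← ofReal_norm,
      ENNReal.ofReal_rpow_of_nonneg (norm_nonneg _) (by norm_num : (0:ℝ) ≤ 3)]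
    congr 1
    rw [← Real.rpow_natCast]; norm_num
  rw [lintegral_congr hpt, ← ofReal_integral_eq_lintegral_ofReal hi
    (Filter.Eventually.of_forall fun x => by positivity)]
  exact ENNReal.ofReal_ne_top

lemma jb_one_le (t : ℝ) : 1 ≤ jb t := by
  have h := Real.sqrt_le_sqrt (show (1:ℝ) ≤ 1 + t^2 by nlinarith)
  rwa [Real.sqrt_one] at h

lemma holder_point (V : SchwartzMap R3 ℝ) (ε₀ : ℝ) (hε₀ : 0 < ε₀) (w : ℝ → SchwartzMap R3 ℂ)
    (t : ℝ) :
    eLpNorm (fun x => ((jb t ^ (-(2 * ε₀)) : ℝ) : ℂ) * ((V x : ℝ) : ℂ) ^ 2 * w t x)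
        (6/5) volume ^ (2:ℝ)
      ≤ eLpNorm (⇑V) 3 volume ^ (2:ℝ)
        * ENNReal.ofReal ((jb t ^ (-(2*ε₀))) * ∫ x : R3, (V x)^2 * ‖w t x‖^2) := by
  set a : ℝ := jb t ^ (-(2*ε₀)) with ha
  have ha0 : 0 ≤ a := by rw [ha]; unfold jb; positivity
  have ha1 : a ≤ 1 := Real.rpow_le_one_of_one_le_of_nonpos (jb_one_le t) (by linarith)
  -- pull out the constant
  have e : (fun x => ((a : ℝ):ℂ) * ((V x : ℝ):ℂ)^2 * w t x)
      = ((a:ℝ):ℂ) • (fun x => ((V x:ℝ):ℂ) * (((V x:ℝ):ℂ) * w t x)) := by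
    funext x
    simp only [Pi.smul_apply, smul_eq_mul]
    ring
  rw [e, eLpNorm_const_smul]
  have hnn : ‖((a:ℝ):ℂ)‖ₑ = ENNReal.ofReal a := by
    rw [← ofReal_norm, Complex.norm_real, Real.norm_eq_abs, abs_of_nonneg ha0]
  rw [hnn]
  -- Hölder
  have hhold : eLpNorm (fun x => ((V x:ℝ):ℂ) * (((V x:ℝ):ℂ) * w t x)) (6/5) volume
      ≤ eLpNorm (fun x : R3 => ((V x:ℝ):ℂ)) 3 volume
        * eLpNorm (fun x => ((V x:ℝ):ℂ) * w t x) 2 volume := by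
    have h65 : (1:ℝ≥0∞) / (6/5) = 1/3 + 1/2 := by
      rw [one_div, ENNReal.inv_div (by norm_num) (by norm_num)]
      have : (1:ℝ≥0∞)/3 + 1/2 = (2 + 3) / 6 := by
        rw [ENNReal.add_div]
        congr 1
        · rw [ENNReal.div_eq_div_iff (by norm_num) (by norm_num) (by norm_num) (by norm_num)]
          norm_num
        · rw [ENNReal.div_eq_div_iff (by norm_num) (by norm_num) (by norm_num) (by norm_num)]
          norm_num
      rw [this]; norm_num
    have h := eLpNorm_smul_le_mul_eLpNorm (p := 3) (q := 2) (r := 6/5)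
      (μ := (volume : Measure R3))
      (f := fun x : R3 => ((V x:ℝ):ℂ) * w t x) (φ := fun x : R3 => ((V x:ℝ):ℂ))
      ((Complex.continuous_ofReal.comp V.continuous).mul (w t).continuous).aestronglyMeasurable
      (Complex.continuous_ofReal.comp V.continuous).aestronglyMeasurable
      (hpqr := ⟨by simpa only [one_div] using h65.symm⟩)
    refine le_trans (le_of_eq (eLpNorm_congr_ae (Filter.Eventually.of_forall fun x => ?_))) h
    simp [Pi.smul_apply, smul_eq_mul]
  calc (ENNReal.ofReal a * eLpNorm (fun x => ((V x:ℝ):ℂ) * (((V x:ℝ):ℂ) * w t x)) (6/5) volume)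
        ^ (2:ℝ)
      ≤ (ENNReal.ofReal a * (eLpNorm (⇑V) 3 volume
          * eLpNorm (fun x => ((V x:ℝ):ℂ) * w t x) 2 volume)) ^ (2:ℝ) := by
        apply ENNReal.rpow_le_rpow _ (by norm_num)
        rw [← eln_ofc V 3]
        exact mul_le_mul_right hhold _
    _ = (ENNReal.ofReal a) ^ (2:ℝ) * (eLpNorm (⇑V) 3 volume ^ (2:ℝ)
          * eLpNorm (fun x => ((V x:ℝ):ℂ) * w t x) 2 volume ^ (2:ℝ)) := by
        rw [ENNReal.mul_rpow_of_nonneg _ _ (by norm_num),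
          ENNReal.mul_rpow_of_nonneg _ _ (by norm_num)]
    _ ≤ ENNReal.ofReal a * (eLpNorm (⇑V) 3 volume ^ (2:ℝ)
          * ENNReal.ofReal (∫ x : R3, (V x)^2 * ‖w t x‖^2)) := by
        rw [E_sq V (w t)]
        apply mul_le_mul_left
        rw [ENNReal.ofReal_rpow_of_nonneg ha0 (by norm_num)]
        apply ENNReal.ofReal_le_ofReal
        have h22 : a ^ (2:ℝ) = a * a := by
          rw [show (2:ℝ) = ((2:ℕ):ℝ) by norm_num, Real.rpow_natCast]; ring
        rw [h22]
        nlinarith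
    _ = eLpNorm (⇑V) 3 volume ^ (2:ℝ)
          * ENNReal.ofReal (a * ∫ x : R3, (V x)^2 * ‖w t x‖^2) := by
        rw [ENNReal.ofReal_mul ha0]
        ring

lemma w0_norm (w0 : SchwartzMap R3 ℂ) :
    eLpNorm (⇑w0) 2 volume = (ENNReal.ofReal (∫ x : R3, ‖w0 x‖^2)) ^ ((1:ℝ)/2) := by
  rw [eLpNorm_eq_lintegral_rpow_enorm_toReal (by norm_num) (by norm_num), enn_two_toReal]
  congr 1
  have hpt : ∀ x : R3, ‖w0 x‖ₑ ^ (2:ℝ) = ENNReal.ofReal (‖w0 x‖^2) := by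
    intro x
    rw [← ofReal_norm,
      ENNReal.ofReal_rpow_of_nonneg (norm_nonneg _) (by norm_num : (0:ℝ) ≤ 2)]
    congr 1
    rw [← Real.rpow_natCast]; norm_num
  rw [lintegral_congr hpt, ← ofReal_integral_eq_lintegral_ofReal (sq_norm_integrable w0)
    (Filter.Eventually.of_forall fun x => by positivity)]

/-- global L²_t L^{6/5}_x bound on the damping term, from the proofs of
Lemmas 4.2 and 4.4 of the paper. -/
theorem statement8 (V : SchwartzMap R3 ℝ) (ε₀ μ : ℝ) (hε₀ : 0 < ε₀)
    (w w' : ℝ → SchwartzMap R3 ℂ)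
    (hC1 : IsC1Curve (Ici 0) w w')
    (hPDE : ∀ t ∈ Ici (0 : ℝ), ∀ x : R3, DampedLHS V ε₀ w w' t x = (μ : ℂ) * nl (w t x)) :
    mixedNorm 2 (6 / 5) (Ici 0)
        (fun t x => ((jb t ^ (-(2 * ε₀)) : ℝ) : ℂ) * ((V x : ℝ) : ℂ) ^ 2 * w t x)
      ≤ ENNReal.ofReal ((2 : ℝ) ^ (-(1 / 2) : ℝ))
          * eLpNorm (⇑V) 3 volume * eLpNorm (⇑(w 0)) 2 volume := by
  have hder := hC1.deriv
  have hcont := hC1.cont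
  have hΛfin := V3_fin V
  set Λ := eLpNorm (⇑V) 3 volume with hΛ
  have hΛ2ne : Λ ^ (2:ℝ) ≠ ⊤ := ENNReal.rpow_ne_top_of_nonneg (by norm_num) hΛfin.ne
  unfold mixedNorm
  rw [if_neg (by norm_num : (2:ℝ≥0∞) ≠ ⊤), enn_two_toReal]
  calc (∫⁻ t in Ici (0:ℝ),
          eLpNorm ((fun t x => ((jb t ^ (-(2 * ε₀)) : ℝ) : ℂ) * ((V x : ℝ) : ℂ) ^ 2 * w t x) t)
            (6/5) volume ^ (2:ℝ)) ^ ((1:ℝ)/2)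
      ≤ (∫⁻ t in Ici (0:ℝ), Λ ^ (2:ℝ)
          * ENNReal.ofReal (jb t ^ (-(2*ε₀)) * ∫ x : R3, (V x)^2 * ‖w t x‖^2)) ^ ((1:ℝ)/2) :=
        ENNReal.rpow_le_rpow (lintegral_mono fun t => holder_point V ε₀ hε₀ w t) (by norm_num)
    _ = (Λ ^ (2:ℝ) * ∫⁻ t in Ici (0:ℝ),
          ENNReal.ofReal (jb t ^ (-(2*ε₀)) * ∫ x : R3, (V x)^2 * ‖w t x‖^2)) ^ ((1:ℝ)/2) := by
        rw [lintegral_const_mul' _ _ hΛ2ne]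
    _ ≤ (Λ ^ (2:ℝ) * ENNReal.ofReal ((∫ x : R3, ‖w 0 x‖^2) / 2)) ^ ((1:ℝ)/2) :=
        ENNReal.rpow_le_rpow
          (mul_le_mul_right (lint_bound V ε₀ μ w w' hder hcont hPDE) _) (by norm_num)
    _ = Λ * (ENNReal.ofReal ((∫ x : R3, ‖w 0 x‖^2) / 2)) ^ ((1:ℝ)/2) := by
        rw [ENNReal.mul_rpow_of_nonneg _ _ (by norm_num), ← ENNReal.rpow_mul]
        norm_num
    _ = ENNReal.ofReal ((2 : ℝ) ^ (-(1 / 2) : ℝ)) * Λ * eLpNorm (⇑(w 0)) 2 volume := by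
        rw [w0_norm (w 0)]
        have hsplit : ENNReal.ofReal ((∫ x : R3, ‖w 0 x‖^2) / 2)
            = ENNReal.ofReal (2⁻¹:ℝ) * ENNReal.ofReal (∫ x : R3, ‖w 0 x‖^2) := by
          rw [← ENNReal.ofReal_mul (by norm_num : (0:ℝ) ≤ 2⁻¹)]
          congr 1
          ring
        rw [hsplit, ENNReal.mul_rpow_of_nonneg _ _ (by norm_num)]
        have hc : (ENNReal.ofReal (2⁻¹:ℝ)) ^ ((1:ℝ)/2)
            = ENNReal.ofReal ((2:ℝ) ^ (-(1/2) : ℝ)) := by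
          rw [ENNReal.ofReal_rpow_of_pos (by norm_num)]
          congr 1
          rw [show ((2:ℝ)⁻¹) = (2:ℝ) ^ (-1:ℝ) by rw [Real.rpow_neg_one],
            ← Real.rpow_mul (by norm_num)]
          norm_num
        rw [hc]
        ring
end
end

section
/- Let V be a real-valued Schwartz function on ℝ³, let α ∈ [2,∞) and β ∈ (2,∞). There is a constant C, depending only on ‖V‖_{L^{3/2}(ℝ³)}, ‖V‖_{L^∞(ℝ³)} and ‖V‖_{L^{β/(β−2)}(ℝ³)}, such that the following holds. If u, u₁, u₂ are measurable functions on [0,∞) × ℝ³ with u = u₁ + u₂, A₁ := ‖u₁‖_{L²_t L⁶_x([0,∞))} < ∞, A₂ := ‖u₁‖_{L^∞_t L²_x([0,∞))} < ∞ and A₃ := ‖u₂‖_{L^α_t L^β_x([0,∞))} < ∞, then ‖ |V|^{1/2} u ‖_{L^α_t L²_x([0,∞))} ≤ C ( A₁^{2/α} A₂^{1−2/α} + A₃ ); in particular |V|^{1/2}u ∈ L^α_t L²_x([0,∞)). -/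
open MeasureTheory Real Set
open scoped ENNReal NNReal

noncomputable section

-- decay bound
private lemma schwartz_decay4 (V : SchwartzMap R3 ℝ) :
    ∃ C : ℝ, 0 ≤ C ∧ ∀ x : R3, ‖V x‖ ≤ C * (1 + ‖x‖) ^ (-(4:ℝ)) := by
  refine ⟨2 ^ 4 * (Finset.Iic ((4,0) : ℕ × ℕ)).sup
      (fun m => SchwartzMap.seminorm (E := R3) (F := ℝ) ℝ m.1 m.2) V,
    mul_nonneg (by norm_num) (apply_nonneg _ _), fun x => ?_⟩
  have h := SchwartzMap.one_add_le_sup_seminorm_apply (𝕜 := ℝ) (m := ((4,0) : ℕ × ℕ)) (k := 4)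
      (n := 0) le_rfl le_rfl V x
  rw [norm_iteratedFDeriv_zero] at h
  have hx : (0:ℝ) < 1 + ‖x‖ := by positivity
  have h4 : ((1 + ‖x‖) ^ (-(4:ℝ))) = ((1 + ‖x‖) ^ (4:ℕ))⁻¹ := by
    rw [← Real.rpow_natCast (1 + ‖x‖) 4, ← Real.rpow_neg hx.le]; norm_num
  rw [h4, ← div_eq_mul_inv, le_div_iff₀ (by positivity), mul_comm]
  exact h

private lemma schwartz_memLp (V : SchwartzMap R3 ℝ) {p : ℝ} (hp : 1 ≤ p) :
    eLpNorm (⇑V) (ENNReal.ofReal p) volume < ∞ := by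
  obtain ⟨C, hC0, hC⟩ := schwartz_decay4 V
  have hp0 : (0:ℝ) < p := lt_of_lt_of_le one_pos hp
  rw [eLpNorm_eq_lintegral_rpow_enorm_toReal (by simpa [ENNReal.ofReal_eq_zero] using hp0)
    ENNReal.ofReal_ne_top, ENNReal.toReal_ofReal hp0.le]
  apply ENNReal.rpow_lt_top_of_nonneg (by positivity)
  have key : ∀ x : R3, ((‖V x‖₊ : ℝ≥0∞)) ^ p ≤
      ENNReal.ofReal (C ^ p) * ENNReal.ofReal ((1 + ‖x‖) ^ (-(4*p))) := by
    intro x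
    have h1 : ((‖V x‖₊ : ℝ≥0∞)) = ENNReal.ofReal ‖V x‖ := (ofReal_norm _).symm
    rw [h1, ENNReal.ofReal_rpow_of_nonneg (norm_nonneg _) hp0.le, ← ENNReal.ofReal_mul (by positivity : (0:ℝ) ≤ C ^ p)]
    apply ENNReal.ofReal_le_ofReal
    calc ‖V x‖ ^ p ≤ (C * (1 + ‖x‖) ^ (-(4:ℝ))) ^ p := by
          apply Real.rpow_le_rpow (norm_nonneg _) (hC x) hp0.le
      _ = C ^ p * (1 + ‖x‖) ^ (-(4*p)) := by
          rw [Real.mul_rpow hC0 (by positivity), ← Real.rpow_mul (by positivity)]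
          ring_nf
  refine LT.lt.ne ?_
  calc (∫⁻ x : R3, ((‖V x‖₊ : ℝ≥0∞)) ^ p) ≤
      ∫⁻ x : R3, ENNReal.ofReal (C ^ p) * ENNReal.ofReal ((1 + ‖x‖) ^ (-(4*p))) :=
        lintegral_mono key
    _ = ENNReal.ofReal (C ^ p) * ∫⁻ x : R3, ENNReal.ofReal ((1 + ‖x‖) ^ (-(4*p))) :=
        lintegral_const_mul' _ _ ENNReal.ofReal_ne_top
    _ < ∞ := by
        apply ENNReal.mul_lt_top ENNReal.ofReal_lt_top
        apply finite_integral_one_add_norm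
        simp only [finrank_euclideanSpace, Fintype.card_fin]
        push_cast
        nlinarith


section W
variable (V : SchwartzMap R3 ℝ)

noncomputable def Wfun (V : SchwartzMap R3 ℝ) : R3 → ℂ := fun x => ((|V x| ^ ((1:ℝ)/2) : ℝ) : ℂ)

lemma Wfun_cont : Continuous (Wfun V) := by
  apply Complex.continuous_ofReal.comp
  exact (V.continuous.abs).rpow_const (fun x => Or.inr (by norm_num))

lemma eLpNorm_Wfun (q : ℝ≥0∞) :
    eLpNorm (Wfun V) q volume = eLpNorm (⇑V) (q * ENNReal.ofReal (1/2)) volume ^ ((1:ℝ)/2) := by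
  rw [← eLpNorm_norm_rpow (⇑V) (q := (1:ℝ)/2) (by norm_num), ← eLpNorm_norm (Wfun V)]
  congr 1
  funext x
  simp [Wfun, Complex.norm_real, abs_of_nonneg (Real.rpow_nonneg (abs_nonneg _) _),
    Real.norm_eq_abs]

lemma Wfun_L3 : eLpNorm (Wfun V) 3 volume < ∞ := by
  rw [eLpNorm_Wfun]
  apply ENNReal.rpow_lt_top_of_nonneg (by norm_num)
  have : (3 : ℝ≥0∞) * ENNReal.ofReal (1/2) = ENNReal.ofReal (3/2) := by
    rw [show (3:ℝ≥0∞) = ENNReal.ofReal 3 by norm_num, ← ENNReal.ofReal_mul (by norm_num)]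
    norm_num
  rw [this]
  exact (schwartz_memLp V (by norm_num)).ne

lemma Wfun_Ltop : eLpNorm (Wfun V) ∞ volume < ∞ := by
  rw [eLpNorm_Wfun]
  apply ENNReal.rpow_lt_top_of_nonneg (by norm_num)
  rw [ENNReal.top_mul (by norm_num)]
  obtain ⟨C, hC0, hC⟩ := schwartz_decay4 V
  refine ne_of_lt (lt_of_le_of_lt (eLpNorm_le_of_ae_bound (C := C)
    (Filter.Eventually.of_forall fun x => ?_)) ?_)
  · calc ‖V x‖ ≤ C * (1 + ‖x‖) ^ (-(4:ℝ)) := hC x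
      _ ≤ C * 1 := by
          apply mul_le_mul_of_nonneg_left _ hC0
          apply Real.rpow_le_one_of_one_le_of_nonpos (by linarith [norm_nonneg x]) (by norm_num)
      _ = C := mul_one C
  · simp [ENNReal.ofReal_lt_top]

lemma Wfun_Lbeta {β : ℝ} (hβ : 2 < β) :
    eLpNorm (Wfun V) (ENNReal.ofReal (2*β/(β-2))) volume < ∞ := by
  rw [eLpNorm_Wfun]
  apply ENNReal.rpow_lt_top_of_nonneg (by norm_num)
  have hb2 : (0:ℝ) < β - 2 := by linarith
  have : ENNReal.ofReal (2*β/(β-2)) * ENNReal.ofReal (1/2) = ENNReal.ofReal (β/(β-2)) := by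
    rw [← ENNReal.ofReal_mul (div_nonneg (by linarith) (by linarith))]
    congr 1
    field_simp
  rw [this]
  refine (schwartz_memLp V ?_).ne
  rw [le_div_iff₀ (by linarith)]
  linarith

end W

-- slice measurability
lemma slice_meas {f : ℝ → R3 → ℂ} (hf : Measurable (Function.uncurry f)) (t : ℝ) :
    Measurable (f t) := hf.comp (measurable_prodMk_left)

lemma eLpNorm_slice_meas {p : ℝ≥0∞} (hp0 : p ≠ 0) (hpt : p ≠ ∞) {f : ℝ → R3 → ℂ}
    (hf : Measurable (Function.uncurry f)) :
    Measurable (fun t => eLpNorm (f t) p volume) := by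
  simp_rw [eLpNorm_eq_lintegral_rpow_enorm_toReal hp0 hpt]
  apply Measurable.pow_const
  apply Measurable.lintegral_prod_right (f := fun t x => ((‖f t x‖₊ : ℝ≥0∞)) ^ p.toReal)
  exact hf.enorm.pow_const _

private lemma mixedNorm_ofReal_eq {a : ℝ} (ha : 0 < a) (r : ℝ≥0∞) (I : Set ℝ)
    (u : ℝ → R3 → ℂ) :
    mixedNorm (ENNReal.ofReal a) r I u
      = (∫⁻ t in I, (eLpNorm (u t) r volume) ^ a) ^ (1/a) := by
  rw [mixedNorm, if_neg ENNReal.ofReal_ne_top, ENNReal.toReal_ofReal ha.le]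

private lemma mixedNorm_two_eq (r : ℝ≥0∞) (I : Set ℝ) (u : ℝ → R3 → ℂ) :
    mixedNorm 2 r I u = (∫⁻ t in I, (eLpNorm (u t) r volume) ^ (2:ℝ)) ^ (1/(2:ℝ)) := by
  rw [mixedNorm, if_neg (by norm_num)]
  norm_num

private lemma mixedNorm_top_eq (r : ℝ≥0∞) (I : Set ℝ) (u : ℝ → R3 → ℂ) :
    mixedNorm ∞ r I u = essSup (fun t => eLpNorm (u t) r volume) (volume.restrict I) := by
  rw [mixedNorm, if_pos rfl]

/-- interpolation-and-localization: a split `u = u₁ + u₂` with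
`u₁ ∈ L²_t L⁶_x ∩ L^∞_t L²_x` and `u₂ ∈ L^α_t L^β_x` yields `|V|^{1/2} u ∈ L^α_t L²_x`,
behind conclusions (3.19) and (3.25) of the paper. -/
theorem statement12 (V : SchwartzMap R3 ℝ) (α β : ℝ) (hα : 2 ≤ α) (hβ : 2 < β) :
    ∃ C > (0 : ℝ), ∀ u u₁ u₂ : ℝ → R3 → ℂ,
      (∀ t x, u t x = u₁ t x + u₂ t x) →
      Measurable (Function.uncurry u₁) →
      Measurable (Function.uncurry u₂) →
      mixedNorm 2 6 (Ici 0) u₁ < ∞ →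
      mixedNorm ∞ 2 (Ici 0) u₁ < ∞ →
      mixedNorm (ENNReal.ofReal α) (ENNReal.ofReal β) (Ici 0) u₂ < ∞ →
      mixedNorm (ENNReal.ofReal α) 2 (Ici 0)
          (fun t x => ((|V x| ^ ((1 : ℝ) / 2) : ℝ) : ℂ) * u t x)
        ≤ ENNReal.ofReal C *
            ((mixedNorm 2 6 (Ici 0) u₁) ^ (2 / α) * (mixedNorm ∞ 2 (Ici 0) u₁) ^ (1 - 2 / α)
              + mixedNorm (ENNReal.ofReal α) (ENNReal.ofReal β) (Ici 0) u₂)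
        ∧ mixedNorm (ENNReal.ofReal α) 2 (Ici 0)
            (fun t x => ((|V x| ^ ((1 : ℝ) / 2) : ℝ) : ℂ) * u t x) < ∞ := by
  classical
  have hα0 : (0:ℝ) < α := by linarith
  have hb2 : (0:ℝ) < β - 2 := by linarith
  have h2α : (0:ℝ) ≤ 2/α := by positivity
  have h1α : (0:ℝ) ≤ 1 - 2/α := by
    rw [sub_nonneg, div_le_one hα0]; exact hα
  set W : R3 → ℂ := Wfun V with hWdef
  have hWm : Measurable W := (Wfun_cont V).measurable
  set K3 : ℝ≥0∞ := eLpNorm W 3 volume with hK3def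
  set Kt : ℝ≥0∞ := eLpNorm W ∞ volume with hKtdef
  set Kb : ℝ≥0∞ := eLpNorm W (ENNReal.ofReal (2*β/(β-2))) volume with hKbdef
  have hK3 : K3 ≠ ∞ := (Wfun_L3 V).ne
  have hKt : Kt ≠ ∞ := (Wfun_Ltop V).ne
  have hKb : Kb ≠ ∞ := (Wfun_Lbeta V hβ).ne
  set D : ℝ≥0∞ := K3 ^ (2/α) * Kt ^ (1 - 2/α) + Kb with hDdef
  have hD : D ≠ ∞ := by
    rw [hDdef]
    exact (ENNReal.add_lt_top.2 ⟨ENNReal.mul_lt_top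
      (ENNReal.rpow_lt_top_of_nonneg h2α hK3) (ENNReal.rpow_lt_top_of_nonneg h1α hKt),
      hKb.lt_top⟩).ne
  refine ⟨D.toReal + 1, by positivity, fun u u₁ u₂ hsplit hm1 hm2 hM1 hM2 hM3 => ?_⟩
  have hCD : D ≤ ENNReal.ofReal (D.toReal + 1) := by
    rw [ENNReal.ofReal_add ENNReal.toReal_nonneg zero_le_one, ENNReal.ofReal_toReal hD]
    exact le_self_add
  set M₁ : ℝ≥0∞ := mixedNorm 2 6 (Ici 0) u₁ with hM₁def
  set M₂ : ℝ≥0∞ := mixedNorm ∞ 2 (Ici 0) u₁ with hM₂def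
  set M₃ : ℝ≥0∞ := mixedNorm (ENNReal.ofReal α) (ENNReal.ofReal β) (Ici 0) u₂ with hM₃def
  set A : ℝ → ℝ≥0∞ := fun t => eLpNorm (fun x => W x * u₁ t x) 2 volume with hAdef
  set B : ℝ → ℝ≥0∞ := fun t => eLpNorm (fun x => W x * u₂ t x) 2 volume with hBdef
  have hWu1 : Measurable (Function.uncurry (fun t x => W x * u₁ t x)) :=
    (hWm.comp measurable_snd).mul hm1
  have hWu2 : Measurable (Function.uncurry (fun t x => W x * u₂ t x)) :=
    (hWm.comp measurable_snd).mul hm2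
  have hAmeas : Measurable A :=
    eLpNorm_slice_meas (by norm_num) (by norm_num) hWu1
  have hBmeas : Measurable B :=
    eLpNorm_slice_meas (by norm_num) (by norm_num) hWu2
  have hu1m : ∀ t, AEStronglyMeasurable (u₁ t) volume :=
    fun t => (slice_meas hm1 t).aestronglyMeasurable
  have hu2m : ∀ t, AEStronglyMeasurable (u₂ t) volume :=
    fun t => (slice_meas hm2 t).aestronglyMeasurable
  -- pointwise splitting
  have hsum : ∀ t, eLpNorm (fun x => W x * u t x) 2 volume ≤ A t + B t := by
    intro t
    have he : (fun x => W x * u t x)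
        = (fun x => W x * u₁ t x) + (fun x => W x * u₂ t x) := by
      funext x; simp [hsplit t x, mul_add]
    rw [he]
    exact eLpNorm_add_le (hWm.aestronglyMeasurable.mul (hu1m t))
      (hWm.aestronglyMeasurable.mul (hu2m t)) one_le_two
  -- Hölder bounds
  have hsmul1 : ∀ t : ℝ, W • u₁ t = fun x => W x * u₁ t x := fun t => rfl
  have hsmul2 : ∀ t : ℝ, W • u₂ t = fun x => W x * u₂ t x := fun t => rfl
  have hpqr36 : (1:ℝ≥0∞)/2 = 1/3 + 1/6 := by
    rw [show (2:ℝ≥0∞) = ENNReal.ofReal 2 by norm_num,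
      show (3:ℝ≥0∞) = ENNReal.ofReal 3 by norm_num,
      show (6:ℝ≥0∞) = ENNReal.ofReal 6 by norm_num]
    simp only [one_div]
    rw [← ENNReal.ofReal_inv_of_pos (by norm_num : (0:ℝ) < 2),
      ← ENNReal.ofReal_inv_of_pos (by norm_num : (0:ℝ) < 3),
      ← ENNReal.ofReal_inv_of_pos (by norm_num : (0:ℝ) < 6),
      ← ENNReal.ofReal_add (by norm_num) (by norm_num)]
    norm_num
  have hpqrb : (1:ℝ≥0∞)/2 = 1/(ENNReal.ofReal (2*β/(β-2))) + 1/(ENNReal.ofReal β) := by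
    rw [show (2:ℝ≥0∞) = ENNReal.ofReal 2 by norm_num]
    simp only [one_div]
    rw [← ENNReal.ofReal_inv_of_pos (by norm_num : (0:ℝ) < 2),
      ← ENNReal.ofReal_inv_of_pos (by positivity : (0:ℝ) < 2*β/(β-2)),
      ← ENNReal.ofReal_inv_of_pos (by linarith : (0:ℝ) < β),
      ← ENNReal.ofReal_add (by positivity) (by positivity)]
    congr 1
    field_simp
    ring
  have hA3 : ∀ t, A t ≤ K3 * eLpNorm (u₁ t) 6 volume := by
    intro t
    haveI : ENNReal.HolderTriple 3 6 2 := ⟨by simp only [← one_div]; exact hpqr36.symm⟩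
    have h := eLpNorm_smul_le_mul_eLpNorm (p := 3) (q := 6) (r := 2)
      (hu1m t) hWm.aestronglyMeasurable
    rw [hsmul1 t] at h
    exact h
  have hAt : ∀ t, A t ≤ Kt * eLpNorm (u₁ t) 2 volume := by
    intro t
    have h := eLpNorm_smul_le_eLpNorm_top_mul_eLpNorm 2 (hu1m t) W
    rw [hsmul1 t] at h
    exact h
  have hBb : ∀ t, B t ≤ Kb * eLpNorm (u₂ t) (ENNReal.ofReal β) volume := by
    intro t
    haveI : ENNReal.HolderTriple (ENNReal.ofReal (2*β/(β-2))) (ENNReal.ofReal β) 2 :=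
      ⟨by simp only [← one_div]; exact hpqrb.symm⟩
    have h := eLpNorm_smul_le_mul_eLpNorm (p := ENNReal.ofReal (2*β/(β-2)))
      (q := ENNReal.ofReal β) (r := 2) (hu2m t) hWm.aestronglyMeasurable
    rw [hsmul2 t] at h
    exact h
  -- unfold mixed norms
  rw [mixedNorm_ofReal_eq hα0]
  have hM₁eq : M₁ = (∫⁻ t in Ici (0:ℝ), (eLpNorm (u₁ t) 6 volume) ^ (2:ℝ)) ^ (1/(2:ℝ)) := by
    rw [hM₁def, mixedNorm_two_eq]
  have hM₂eq : M₂ = essSup (fun t => eLpNorm (u₁ t) 2 volume) (volume.restrict (Ici 0)) := by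
    rw [hM₂def, mixedNorm_top_eq]
  have hM₃eq : M₃ = (∫⁻ t in Ici (0:ℝ), (eLpNorm (u₂ t) (ENNReal.ofReal β) volume) ^ α)
      ^ (1/α) := by
    rw [hM₃def, mixedNorm_ofReal_eq hα0]
  -- first main estimate
  have step1 : (∫⁻ t in Ici (0:ℝ),
        (eLpNorm ((fun t x => ((|V x| ^ ((1:ℝ)/2) : ℝ) : ℂ) * u t x) t) 2 volume) ^ α)
        ^ (1/α)
      ≤ (∫⁻ t in Ici (0:ℝ), A t ^ α) ^ (1/α) + (∫⁻ t in Ici (0:ℝ), B t ^ α) ^ (1/α) := by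
    have mono : (∫⁻ t in Ici (0:ℝ),
        (eLpNorm ((fun t x => ((|V x| ^ ((1:ℝ)/2) : ℝ) : ℂ) * u t x) t) 2 volume) ^ α)
        ≤ ∫⁻ t in Ici (0:ℝ), (A t + B t) ^ α := by
      apply lintegral_mono
      intro t
      exact ENNReal.rpow_le_rpow (hsum t) hα0.le
    refine le_trans (ENNReal.rpow_le_rpow mono (by positivity)) ?_
    have := ENNReal.lintegral_Lp_add_le (μ := volume.restrict (Ici 0))
      hAmeas.aemeasurable hBmeas.aemeasurable (by linarith : 1 ≤ α)
    simpa using this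
  -- bound the A-term
  have hAbound : (∫⁻ t in Ici (0:ℝ), A t ^ α) ^ (1/α)
      ≤ (K3 ^ (2/α) * Kt ^ (1 - 2/α)) * (M₁ ^ (2/α) * M₂ ^ (1 - 2/α)) := by
    have hae : ∀ᵐ t ∂(volume.restrict (Ici (0:ℝ))),
        A t ^ α ≤ (K3 * eLpNorm (u₁ t) 6 volume) ^ (2:ℝ) * (Kt * M₂) ^ (α - 2) := by
      filter_upwards [ENNReal.ae_le_essSup (μ := volume.restrict (Ici (0:ℝ)))
        (fun t => eLpNorm (u₁ t) 2 volume)] with t ht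
      have h1 : A t ≤ K3 * eLpNorm (u₁ t) 6 volume := hA3 t
      have h2 : A t ≤ Kt * M₂ := by
        refine (hAt t).trans ?_
        rw [hM₂eq]
        exact mul_le_mul_right ht _
      rcases eq_or_ne (A t) 0 with h0 | h0
      · rw [h0, ENNReal.zero_rpow_of_pos hα0]; exact zero_le
      rcases eq_or_ne (A t) ∞ with hT | hT
      · have e1 : K3 * eLpNorm (u₁ t) 6 volume = ∞ := by
          rw [← top_le_iff, ← hT]; exact h1
        have e2 : Kt * M₂ = ∞ := by
          rw [← top_le_iff, ← hT]; exact h2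
        rw [e1, e2, ENNReal.top_rpow_of_pos (by norm_num : (0:ℝ) < 2)]
        have hne : (⊤:ℝ≥0∞) ^ (α-2) ≠ 0 := by
          rcases eq_or_lt_of_le (show (0:ℝ) ≤ α - 2 by linarith) with h|h
          · rw [← h]; simp
          · rw [ENNReal.top_rpow_of_pos h]; simp
        rw [ENNReal.top_mul hne]
        exact le_top
      · have hsplitpow : A t ^ α = A t ^ (2:ℝ) * A t ^ (α - 2) := by
          rw [← ENNReal.rpow_add _ _ h0 hT]
          norm_num
        rw [hsplitpow]
        exact mul_le_mul' (ENNReal.rpow_le_rpow h1 (by norm_num))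
          (ENNReal.rpow_le_rpow h2 (by linarith))
    have hint : (∫⁻ t in Ici (0:ℝ), A t ^ α)
        ≤ (Kt * M₂) ^ (α - 2) * ((K3 ^ (2:ℝ)) * (M₁ ^ (2:ℝ))) := by
      calc (∫⁻ t in Ici (0:ℝ), A t ^ α)
          ≤ ∫⁻ t in Ici (0:ℝ),
              (K3 * eLpNorm (u₁ t) 6 volume) ^ (2:ℝ) * (Kt * M₂) ^ (α - 2) :=
            lintegral_mono_ae hae
        _ = (∫⁻ t in Ici (0:ℝ), (K3 * eLpNorm (u₁ t) 6 volume) ^ (2:ℝ)) *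
              (Kt * M₂) ^ (α - 2) := by
            refine lintegral_mul_const' _ _ ?_
            exact (ENNReal.rpow_lt_top_of_nonneg (by linarith)
              (ENNReal.mul_lt_top hKt.lt_top hM2).ne).ne
        _ = (Kt * M₂) ^ (α - 2) *
              ∫⁻ t in Ici (0:ℝ), (K3 * eLpNorm (u₁ t) 6 volume) ^ (2:ℝ) := mul_comm _ _
        _ = (Kt * M₂) ^ (α - 2) * ((K3 ^ (2:ℝ)) * (M₁ ^ (2:ℝ))) := by
            congr 1
            have : ∀ t, (K3 * eLpNorm (u₁ t) 6 volume) ^ (2:ℝ)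
                = K3 ^ (2:ℝ) * (eLpNorm (u₁ t) 6 volume) ^ (2:ℝ) := fun t =>
              ENNReal.mul_rpow_of_nonneg _ _ (by norm_num)
            simp_rw [this]
            rw [lintegral_const_mul' _ _ (ENNReal.rpow_lt_top_of_nonneg (by norm_num) hK3).ne]
            congr 1
            rw [hM₁eq, ← ENNReal.rpow_mul]
            norm_num
    calc (∫⁻ t in Ici (0:ℝ), A t ^ α) ^ (1/α)
        ≤ ((Kt * M₂) ^ (α - 2) * ((K3 ^ (2:ℝ)) * (M₁ ^ (2:ℝ)))) ^ (1/α) :=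
          ENNReal.rpow_le_rpow hint (by positivity)
      _ = (K3 ^ (2/α) * Kt ^ (1 - 2/α)) * (M₁ ^ (2/α) * M₂ ^ (1 - 2/α)) := by
          rw [ENNReal.mul_rpow_of_nonneg _ _ (by positivity : (0:ℝ) ≤ 1/α),
            ENNReal.mul_rpow_of_nonneg _ _ (by positivity : (0:ℝ) ≤ 1/α),
            ENNReal.mul_rpow_of_nonneg _ _ (show (0:ℝ) ≤ α - 2 by linarith),
            ENNReal.mul_rpow_of_nonneg _ _ (by positivity : (0:ℝ) ≤ 1/α),
            ← ENNReal.rpow_mul, ← ENNReal.rpow_mul, ← ENNReal.rpow_mul, ← ENNReal.rpow_mul]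
          have e1 : (α - 2) * (1/α) = 1 - 2/α := by field_simp
          have e2 : (2:ℝ) * (1/α) = 2/α := by field_simp
          rw [e1, e2]
          ring
  -- bound the B-term
  have hBbound : (∫⁻ t in Ici (0:ℝ), B t ^ α) ^ (1/α) ≤ Kb * M₃ := by
    have hint : (∫⁻ t in Ici (0:ℝ), B t ^ α)
        ≤ Kb ^ α * ∫⁻ t in Ici (0:ℝ), (eLpNorm (u₂ t) (ENNReal.ofReal β) volume) ^ α := by
      rw [← lintegral_const_mul' _ _ (ENNReal.rpow_lt_top_of_nonneg hα0.le hKb).ne]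
      apply lintegral_mono
      intro t
      calc B t ^ α ≤ (Kb * eLpNorm (u₂ t) (ENNReal.ofReal β) volume) ^ α :=
            ENNReal.rpow_le_rpow (hBb t) hα0.le
        _ = Kb ^ α * (eLpNorm (u₂ t) (ENNReal.ofReal β) volume) ^ α :=
            ENNReal.mul_rpow_of_nonneg _ _ hα0.le
    calc (∫⁻ t in Ici (0:ℝ), B t ^ α) ^ (1/α)
        ≤ (Kb ^ α * ∫⁻ t in Ici (0:ℝ),
            (eLpNorm (u₂ t) (ENNReal.ofReal β) volume) ^ α) ^ (1/α) :=
          ENNReal.rpow_le_rpow hint (by positivity)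
      _ = Kb * M₃ := by
          rw [ENNReal.mul_rpow_of_nonneg _ _ (by positivity : (0:ℝ) ≤ 1/α),
            ← ENNReal.rpow_mul, hM₃eq]
          congr 1
          rw [mul_one_div, div_self hα0.ne', ENNReal.rpow_one]
  -- combine
  have main : (∫⁻ t in Ici (0:ℝ),
        (eLpNorm ((fun t x => ((|V x| ^ ((1:ℝ)/2) : ℝ) : ℂ) * u t x) t) 2 volume) ^ α)
        ^ (1/α)
      ≤ ENNReal.ofReal (D.toReal + 1) * (M₁ ^ (2/α) * M₂ ^ (1 - 2/α) + M₃) := by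
    refine le_trans step1 (le_trans (add_le_add hAbound hBbound) ?_)
    rw [mul_add]
    refine add_le_add (mul_le_mul_left ?_ _) (mul_le_mul_left ?_ _)
    · exact le_trans (le_trans le_self_add hCD) (le_refl _)
    · exact le_trans (le_trans le_add_self hCD) (le_refl _)
  constructor
  · exact main
  · refine lt_of_le_of_lt main ?_
    apply ENNReal.mul_lt_top ENNReal.ofReal_lt_top
    apply ENNReal.add_lt_top.2
    constructor
    · exact ENNReal.mul_lt_top (ENNReal.rpow_lt_top_of_nonneg h2α hM1.ne)
        (ENNReal.rpow_lt_top_of_nonneg h1α hM2.ne)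
    · exact hM3
end
end
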